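/- If G is a bipartite graph on n nodes with maximum degree Δ and τ is the strict majority threshold, then every timed target set in the non-progressive threshold model has size at least 2n/(Δ+1). -/
import Mathlib


open Finset
open scoped Classical

variable {V : Type*}

noncomputable def Qseq (G : SimpleGraph V) [Fintype V] (τ : V → ℕ) (S : ℕ → Finset V) :
    ℕ → Finset V
  | 0 => ∅
  | i + 1 => Finset.univ.filter fun v =>
      τ v ≤ (G.neighborFinset v ∩ (S i ∪ Qseq G τ S i)).card

def IsTTS (G : SimpleGraph V) [Fintype V] (τ : V → ℕ) (S : ℕ → Finset V) (k : ℕ) : Prop :=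
  S k = ∅ ∧ Qseq G τ S k = Finset.univ

def ttsSize (S : ℕ → Finset V) (k : ℕ) : ℕ := ∑ i ∈ Finset.range (k + 1), (S i).card

noncomputable def strictMaj (G : SimpleGraph V) [Fintype V] (v : V) : ℕ := (G.degree v + 2) / 2

noncomputable def npStep (G : SimpleGraph V) [Fintype V] (τ : V → ℕ) (A : Finset V) : Finset V :=
  Finset.univ.filter fun v => τ v ≤ (G.neighborFinset v ∩ A).card

def IsTS (G : SimpleGraph V) [Fintype V] (τ : V → ℕ) (S : Finset V) : Prop :=
  ∃ i : ℕ, (npStep G τ)^[i] S = Finset.univ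

noncomputable def MTT (G : SimpleGraph V) [Fintype V] (τ : V → ℕ) : ℕ :=
  sInf {m | ∃ (S : ℕ → Finset V) (k : ℕ), IsTTS G τ S k ∧ ttsSize S k = m}

/-- Progressive spread step (keeps previously active vertices). -/
noncomputable def pStep (G : SimpleGraph V) [Fintype V] (τ : V → ℕ) (A : Finset V) : Finset V :=
  A ∪ Finset.univ.filter fun v => τ v ≤ (G.neighborFinset v ∩ A).card

/-- Edge boundary of a set, counted from the inside. -/
noncomputable def bnd (G : SimpleGraph V) [Fintype V] (A : Finset V) : ℕ :=
  ∑ v ∈ A, (G.neighborFinset v \ A).card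

lemma double_count (G : SimpleGraph V) [Fintype V] (A C : Finset V) :
    ∑ v ∈ A, (G.neighborFinset v ∩ C).card = ∑ u ∈ C, (G.neighborFinset u ∩ A).card := by
  have key : ∀ B D : Finset V, ∑ v ∈ B, (G.neighborFinset v ∩ D).card
      = ∑ v ∈ B, ∑ u ∈ D, if G.Adj v u then 1 else 0 := by
    intro B D
    refine Finset.sum_congr rfl fun v _ => ?_
    have h : G.neighborFinset v ∩ D = D.filter fun u => G.Adj v u := by
      ext u; simp [SimpleGraph.mem_neighborFinset, and_comm]
    rw [h, Finset.card_filter]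
  rw [key, key, Finset.sum_comm]
  refine Finset.sum_congr rfl fun u _ => Finset.sum_congr rfl fun v _ => ?_
  exact if_congr (G.adj_comm v u) rfl rfl

lemma pStep_pot (G : SimpleGraph V) [Fintype V] (τ : V → ℕ)
    (hτ : ∀ v, G.degree v + 1 ≤ 2 * τ v) (A : Finset V) :
    bnd G (pStep G τ A) + (pStep G τ A).card ≤ bnd G A + A.card := by
  classical
  set C := (Finset.univ.filter fun v => τ v ≤ (G.neighborFinset v ∩ A).card) \ A with hC
  have hCA : ∀ u ∈ C, u ∉ A := fun u hu => (Finset.mem_sdiff.mp hu).2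
  have hCτ : ∀ u ∈ C, τ u ≤ (G.neighborFinset u ∩ A).card := fun u hu =>
    (Finset.mem_filter.mp (Finset.mem_sdiff.mp hu).1).2
  have hA' : pStep G τ A = A ∪ C := by
    rw [pStep, hC, Finset.union_sdiff_self_eq_union]
  have hdisj : Disjoint A C := Finset.disjoint_sdiff
  have split1 : ∀ v : V, (G.neighborFinset v \ A).card =
      (G.neighborFinset v \ (A ∪ C)).card + (G.neighborFinset v ∩ C).card := by
    intro v
    have e1 : G.neighborFinset v \ (A ∪ C) = (G.neighborFinset v \ A) \ C := by
      ext u; simp [not_or]; tauto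
    have e2 : (G.neighborFinset v \ A) ∩ C = G.neighborFinset v ∩ C := by
      ext u
      simp only [Finset.mem_inter, Finset.mem_sdiff]
      constructor
      · rintro ⟨⟨h1, _⟩, h2⟩; exact ⟨h1, h2⟩
      · rintro ⟨h1, h2⟩; exact ⟨⟨h1, hCA u h2⟩, h2⟩
    rw [e1, ← e2]
    exact (Finset.card_sdiff_add_card_inter _ _).symm
  have hbndA : bnd G A = ∑ v ∈ A, (G.neighborFinset v \ (A ∪ C)).card
      + ∑ v ∈ A, (G.neighborFinset v ∩ C).card := by
    rw [bnd, ← Finset.sum_add_distrib]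
    exact Finset.sum_congr rfl fun v _ => split1 v
  have hbndA' : bnd G (A ∪ C) = ∑ v ∈ A, (G.neighborFinset v \ (A ∪ C)).card
      + ∑ u ∈ C, (G.neighborFinset u \ (A ∪ C)).card := by
    rw [bnd]; exact Finset.sum_union hdisj
  have hCstep : ∑ u ∈ C, (G.neighborFinset u \ (A ∪ C)).card + C.card
      ≤ ∑ v ∈ A, (G.neighborFinset v ∩ C).card := by
    rw [double_count G A C]
    have hkey : ∀ u ∈ C, (G.neighborFinset u \ (A ∪ C)).card + 1
        ≤ (G.neighborFinset u ∩ A).card := by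
      intro u hu
      have h1 : (G.neighborFinset u \ (A ∪ C)).card + (G.neighborFinset u ∩ A).card
          ≤ G.degree u := by
        rw [← G.card_neighborFinset_eq_degree u,
          ← Finset.card_union_of_disjoint (Finset.disjoint_left.mpr
            fun x hx1 hx2 => (Finset.mem_sdiff.mp hx1).2
              (Finset.mem_union_left _ (Finset.mem_inter.mp hx2).2))]
        exact Finset.card_le_card
          (Finset.union_subset Finset.sdiff_subset Finset.inter_subset_left)
      have h2 := hCτ u hu
      have h3 := hτ u
      omega
    calc ∑ u ∈ C, (G.neighborFinset u \ (A ∪ C)).card + C.card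
        = ∑ u ∈ C, ((G.neighborFinset u \ (A ∪ C)).card + 1) := by
          rw [Finset.sum_add_distrib, Finset.sum_const, smul_eq_mul, mul_one]
      _ ≤ ∑ u ∈ C, (G.neighborFinset u ∩ A).card := Finset.sum_le_sum hkey
  have hcard : (A ∪ C).card = A.card + C.card := Finset.card_union_of_disjoint hdisj
  rw [hA']
  omega

lemma pot_iter (G : SimpleGraph V) [Fintype V] (τ : V → ℕ)
    (hτ : ∀ v, G.degree v + 1 ≤ 2 * τ v) (A : Finset V) (j : ℕ) :
    bnd G ((pStep G τ)^[j] A) + ((pStep G τ)^[j] A).card ≤ bnd G A + A.card := by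
  induction j with
  | zero => simp
  | succ j ih =>
    rw [Function.iterate_succ_apply']
    exact le_trans (pStep_pot G τ hτ _) ih

lemma subset_pStep_iter (G : SimpleGraph V) [Fintype V] (τ : V → ℕ) (A : Finset V) (i : ℕ) :
    A ⊆ (pStep G τ)^[i] A := by
  induction i with
  | zero => simp
  | succ i ih =>
    rw [Function.iterate_succ_apply']
    exact ih.trans Finset.subset_union_left

theorem stmt4 [Fintype V] (G : SimpleGraph V) (X Y : Finset V)
    (hpart : ∀ v, v ∈ X ↔ v ∉ Y)
    (hbip : ∀ a b, G.Adj a b → (a ∈ X ↔ b ∈ Y))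
    (S : ℕ → Finset V) (k : ℕ) (hS : IsTTS G (strictMaj G) S k) :
    2 * Fintype.card V ≤ ttsSize S k * (G.maxDegree + 1) := by
  classical
  obtain ⟨hSk, hQk⟩ := hS
  rcases Nat.eq_zero_or_pos (Fintype.card V) with hV | hV
  · simp [hV]
  rcases k with _ | k'
  · exfalso
    have h0 : (∅ : Finset V) = Finset.univ := hQk
    have : Fintype.card V = 0 := by
      rw [← Finset.card_univ, ← h0, Finset.card_empty]
    omega
  have hτ : ∀ v, G.degree v + 1 ≤ 2 * strictMaj G v := by
    intro v; unfold strictMaj; omega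
  -- every vertex has threshold at most its degree
  have hdeg : ∀ v : V, strictMaj G v ≤ G.degree v := by
    intro v
    have hv : v ∈ Qseq G (strictMaj G) S (k' + 1) := by
      rw [hQk]; exact Finset.mem_univ v
    rw [Qseq, Finset.mem_filter] at hv
    calc strictMaj G v ≤ _ := hv.2
      _ ≤ (G.neighborFinset v).card := Finset.card_le_card Finset.inter_subset_left
      _ = G.degree v := G.card_neighborFinset_eq_degree v
  -- the configuration stays fully active one more step
  have hQ2 : Qseq G (strictMaj G) S (k' + 2) = Finset.univ := by
    rw [Qseq]
    apply Finset.eq_univ_of_forall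
    intro v
    rw [Finset.mem_filter]
    refine ⟨Finset.mem_univ v, ?_⟩
    rw [hSk, hQk, Finset.empty_union, Finset.inter_univ,
      G.card_neighborFinset_eq_degree v]
    exact hdeg v
  -- parity class indicator
  set χ : V → ℕ := fun v => if v ∈ X then 1 else 0 with hχ
  set U : ℕ → Finset V := fun ε => (Finset.range (k' + 2)).biUnion
      (fun i => (S i).filter (fun v => (χ v + i) % 2 = ε)) with hU
  have hopp : ∀ u v, G.Adj v u → χ u + χ v = 1 := by
    intro u v hadj
    have h1 := hbip v u hadj
    have h2 := hpart u
    simp only [hχ]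
    by_cases hvX : v ∈ X <;> by_cases huX : u ∈ X <;> simp only [hvX, huX, if_true, if_false] <;>
      tauto
  -- key induction: parity-ε slice of Q_i lies in i-fold progressive closure of U ε
  have main : ∀ i, i ≤ k' + 2 → ∀ ε v, v ∈ Qseq G (strictMaj G) S i →
      (χ v + i) % 2 = ε → v ∈ (pStep G (strictMaj G))^[i] (U ε) := by
    intro i
    induction i with
    | zero => intro _ ε v hv; exact absurd hv (Finset.notMem_empty v)
    | succ i ih =>
      intro hik ε v hv hcls
      rw [Qseq, Finset.mem_filter] at hv
      have hsub : G.neighborFinset v ∩ (S i ∪ Qseq G (strictMaj G) S i)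
          ⊆ (pStep G (strictMaj G))^[i] (U ε) := by
        intro u hu
        rw [Finset.mem_inter, Finset.mem_union] at hu
        have hadj : G.Adj v u := (SimpleGraph.mem_neighborFinset _ _ _).mp hu.1
        have hcu : (χ u + i) % 2 = ε := by
          have := hopp u v hadj
          omega
        rcases hu.2 with h | h
        · have hmem : u ∈ U ε := Finset.mem_biUnion.mpr
            ⟨i, Finset.mem_range.mpr (by omega), Finset.mem_filter.mpr ⟨h, hcu⟩⟩
          exact subset_pStep_iter G (strictMaj G) (U ε) i hmem
        · exact ih (by omega) ε u h hcu
      rw [Function.iterate_succ_apply']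
      refine Finset.mem_union_right _ (Finset.mem_filter.mpr ⟨Finset.mem_univ v, ?_⟩)
      exact le_trans hv.2
        (Finset.card_le_card (Finset.subset_inter Finset.inter_subset_left hsub))
  -- both parity classes progressively cover everything
  have hcov : ∀ ε, (ε = (k' + 2) % 2 ∨ ε = (k' + 1) % 2) →
      (pStep G (strictMaj G))^[k' + 2] (U ε) = Finset.univ := by
    intro ε hε
    apply Finset.eq_univ_of_forall
    intro v
    have step : ((pStep G (strictMaj G))^[k' + 1] (U ε))
        ⊆ (pStep G (strictMaj G))^[k' + 2] (U ε) := by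
      rw [Function.iterate_succ_apply' (pStep G (strictMaj G)) (k' + 1) (U ε), pStep]
      intro x hx
      exact Finset.mem_union_left _ hx
    have hv1 : v ∈ Qseq G (strictMaj G) S (k' + 1) := by rw [hQk]; exact Finset.mem_univ v
    have hv2 : v ∈ Qseq G (strictMaj G) S (k' + 2) := by rw [hQ2]; exact Finset.mem_univ v
    by_cases hvX : v ∈ X
    · have h1 : χ v = 1 := by simp [hχ, hvX]
      rcases hε with rfl | rfl
      · exact step (main (k' + 1) (by omega) _ v hv1 (by omega))
      · exact main (k' + 2) (by omega) _ v hv2 (by omega)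
    · have h1 : χ v = 0 := by simp [hχ, hvX]
      rcases hε with rfl | rfl
      · exact main (k' + 2) (by omega) _ v hv2 (by omega)
      · exact step (main (k' + 1) (by omega) _ v hv1 (by omega))
  -- potential bound per class
  have hbound : ∀ ε, (ε = (k' + 2) % 2 ∨ ε = (k' + 1) % 2) →
      Fintype.card V ≤ (U ε).card * (G.maxDegree + 1) := by
    intro ε hε
    have h1 := pot_iter G (strictMaj G) hτ (U ε) (k' + 2)
    rw [hcov ε hε, Finset.card_univ] at h1
    have h3 : bnd G (U ε) ≤ (U ε).card * G.maxDegree := by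
      rw [bnd]
      calc ∑ v ∈ U ε, (G.neighborFinset v \ U ε).card
          ≤ ∑ _v ∈ U ε, G.maxDegree := by
            apply Finset.sum_le_sum
            intro v _
            calc (G.neighborFinset v \ U ε).card ≤ (G.neighborFinset v).card :=
                  Finset.card_le_card Finset.sdiff_subset
              _ = G.degree v := G.card_neighborFinset_eq_degree v
              _ ≤ G.maxDegree := G.degree_le_maxDegree v
        _ = (U ε).card * G.maxDegree := by rw [Finset.sum_const, smul_eq_mul]
    have h4 : (U ε).card * (G.maxDegree + 1) = (U ε).card * G.maxDegree + (U ε).card :=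
      Nat.mul_succ _ _
    omega
  -- the two classes' sizes add up to at most the total size
  have hUcard : (U ((k' + 2) % 2)).card + (U ((k' + 1) % 2)).card ≤ ttsSize S (k' + 1) := by
    have hb : ∀ ε, (U ε).card
        ≤ ∑ i ∈ Finset.range (k' + 2), ((S i).filter (fun v => (χ v + i) % 2 = ε)).card := by
      intro ε
      exact Finset.card_biUnion_le
    have hsum : ∀ i, ((S i).filter (fun v => (χ v + i) % 2 = (k' + 2) % 2)).card
        + ((S i).filter (fun v => (χ v + i) % 2 = (k' + 1) % 2)).card ≤ (S i).card := by
      intro i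
      have hd : Disjoint ((S i).filter (fun v => (χ v + i) % 2 = (k' + 2) % 2))
          ((S i).filter (fun v => (χ v + i) % 2 = (k' + 1) % 2)) := by
        apply Finset.disjoint_left.mpr
        intro v hv1 hv2
        have e1 := (Finset.mem_filter.mp hv1).2
        have e2 := (Finset.mem_filter.mp hv2).2
        omega
      rw [← Finset.card_union_of_disjoint hd]
      exact Finset.card_le_card (Finset.union_subset (Finset.filter_subset _ _)
        (Finset.filter_subset _ _))
    calc (U ((k' + 2) % 2)).card + (U ((k' + 1) % 2)).card
        ≤ ∑ i ∈ Finset.range (k' + 2), (((S i).filter (fun v => (χ v + i) % 2 = (k' + 2) % 2)).card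
          + ((S i).filter (fun v => (χ v + i) % 2 = (k' + 1) % 2)).card) := by
          rw [Finset.sum_add_distrib]
          exact Nat.add_le_add (hb _) (hb _)
      _ ≤ ∑ i ∈ Finset.range (k' + 2), (S i).card := Finset.sum_le_sum fun i _ => hsum i
      _ = ttsSize S (k' + 1) := rfl
  have hA := hbound _ (Or.inl rfl)
  have hB := hbound _ (Or.inr rfl)
  calc 2 * Fintype.card V
      ≤ ((U ((k' + 2) % 2)).card + (U ((k' + 1) % 2)).card) * (G.maxDegree + 1) := by
        rw [Nat.add_mul]; omega
    _ ≤ ttsSize S (k' + 1) * (G.maxDegree + 1) := Nat.mul_le_mul_right _ hUcard
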